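/- Let A be a unital ring equipped with a decreasing filtration A = F_0 \supseteq F_1 \supseteq F_2 \supseteq \cdots by additive subgroups satisfying F_n \cdot F_m \subseteq F_{n+m} for all n,m \ge 0. Assume A is complete and Hausdorff with respect to this filtration, i.e. the canonical ring homomorphism A \to \varprojlim_n A/F_n is bijective. If the associated graded ring gr(A) = \bigoplus_{n\ge 0} F_n/F_{n+1} is left noetherian, then A is left noetherian. -/

import Mathlib

open DirectSum

section

variable {A : Type*} [Ring A]

/-- A decreasing multiplicative filtration `A = F₀ ⊇ F₁ ⊇ F₂ ⊇ ⋯` of a ring `A` by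
additive subgroups, with `Fₙ · Fₘ ⊆ Fₙ₊ₘ`. -/
structure RingFiltration (A : Type*) [Ring A] where
  F : ℕ → AddSubgroup A
  zero_eq_top : F 0 = ⊤
  antitone : ∀ n, F (n + 1) ≤ F n
  mul_mem : ∀ ⦃m n : ℕ⦄ ⦃x y : A⦄, x ∈ F m → y ∈ F n → x * y ∈ F (m + n)

namespace RingFiltration

variable (𝓕 : RingFiltration A)

instance : SetLike.GradedMonoid 𝓕.F where
  one_mem := by rw [𝓕.zero_eq_top]; trivial
  mul_mem _ _ _ _ hx hy := 𝓕.mul_mem hx hy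

/-- The graded ring `⨁ₙ Fₙ` attached to the filtration. -/
abbrev Rees := ⨁ n, 𝓕.F n

theorem mem_succ_of_right {u v : 𝓕.Rees}
    (hv : ∀ n, (v n : A) ∈ 𝓕.F (n + 1)) (n : ℕ) :
    ((u * v) n : A) ∈ 𝓕.F (n + 1) := by
  classical
  rw [DirectSum.coe_mul_apply]
  refine AddSubgroup.sum_mem _ ?_
  rintro ⟨i, j⟩ hij
  obtain ⟨-, hsum⟩ := Finset.mem_filter.mp hij
  have h : (u i : A) * (v j : A) ∈ 𝓕.F (i + (j + 1)) := 𝓕.mul_mem (u i).2 (hv j)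
  have hidx : i + (j + 1) = n + 1 := by omega
  rwa [hidx] at h

theorem mem_succ_of_left {u v : 𝓕.Rees}
    (hu : ∀ n, (u n : A) ∈ 𝓕.F (n + 1)) (n : ℕ) :
    ((u * v) n : A) ∈ 𝓕.F (n + 1) := by
  classical
  rw [DirectSum.coe_mul_apply]
  refine AddSubgroup.sum_mem _ ?_
  rintro ⟨i, j⟩ hij
  obtain ⟨-, hsum⟩ := Finset.mem_filter.mp hij
  have h : (u i : A) * (v j : A) ∈ 𝓕.F (i + 1 + j) := 𝓕.mul_mem (hu i) (v j).2
  have hidx : i + 1 + j = n + 1 := by omega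
  rwa [hidx] at h

/-- The congruence relation on `⨁ₙ Fₙ` whose quotient is the associated graded ring
`gr(A) = ⨁ₙ Fₙ/Fₙ₊₁` of the filtration. -/
def grCon : RingCon 𝓕.Rees where
  r x y := ∀ n, (x n : A) - (y n : A) ∈ 𝓕.F (n + 1)
  iseqv := by
    refine ⟨fun x n => by simpa using (𝓕.F (n + 1)).zero_mem, ?_, ?_⟩
    · intro x y h n
      simpa using (𝓕.F (n + 1)).neg_mem (h n)
    · intro x y w h1 h2 n
      simpa using (𝓕.F (n + 1)).add_mem (h1 n) (h2 n)
  add' := by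
    intro a b a' b' h1 h2 n
    have := (𝓕.F (n + 1)).add_mem (h1 n) (h2 n)
    rw [DirectSum.add_apply, DirectSum.add_apply, AddSubgroup.coe_add, AddSubgroup.coe_add]
    convert this using 1
    abel
  mul' := by
    intro a b a' b' h1 h2 n
    have key : a * a' - b * b' = a * (a' - b') + (a - b) * b' := by noncomm_ring
    have m1 : ((a * (a' - b')) n : A) ∈ 𝓕.F (n + 1) :=
      𝓕.mem_succ_of_right (fun m => by
        rw [DirectSum.sub_apply, AddSubgroup.coe_sub]; exact h2 m) n
    have m2 : (((a - b) * b') n : A) ∈ 𝓕.F (n + 1) :=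
      𝓕.mem_succ_of_left (fun m => by
        rw [DirectSum.sub_apply, AddSubgroup.coe_sub]; exact h1 m) n
    have : ((a * a' - b * b') n : A) ∈ 𝓕.F (n + 1) := by
      rw [key, DirectSum.add_apply, AddSubgroup.coe_add]
      exact (𝓕.F (n + 1)).add_mem m1 m2
    rwa [DirectSum.sub_apply, AddSubgroup.coe_sub] at this

/-- The associated graded ring `gr(A) = ⨁ₙ Fₙ/Fₙ₊₁` of the filtration, realized as the
quotient of the graded ring `⨁ₙ Fₙ` by the homogeneous two-sided ideal `⨁ₙ Fₙ₊₁`. -/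
abbrev AssociatedGraded := 𝓕.grCon.Quotient

/-- The congruence relation `a ~ b ↔ a - b ∈ Fₙ`; its quotient ring is `A/Fₙ`
(each `Fₙ` is a two-sided ideal since `F₀ = A`). -/
def levelCon (n : ℕ) : RingCon A where
  r a b := a - b ∈ 𝓕.F n
  iseqv := by
    refine ⟨fun a => by simpa using (𝓕.F n).zero_mem, ?_, ?_⟩
    · intro a b h
      simpa using (𝓕.F n).neg_mem h
    · intro a b d h1 h2
      simpa using (𝓕.F n).add_mem h1 h2
  add' := by
    intro a b a' b' h1 h2
    show a + a' - (b + b') ∈ 𝓕.F n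
    have heq : a + a' - (b + b') = (a - b) + (a' - b') := by abel
    rw [heq]
    exact (𝓕.F n).add_mem h1 h2
  mul' := by
    intro a b a' b' h1 h2
    show a * a' - b * b' ∈ 𝓕.F n
    have key : a * a' - b * b' = a * (a' - b') + (a - b) * b' := by noncomm_ring
    have m1 : a * (a' - b') ∈ 𝓕.F n := by
      have := 𝓕.mul_mem (x := a) (by rw [𝓕.zero_eq_top]; trivial) h2
      rwa [zero_add] at this
    have m2 : (a - b) * b' ∈ 𝓕.F n := by
      have := 𝓕.mul_mem h1 (y := b') (by rw [𝓕.zero_eq_top]; trivial)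
      rwa [add_zero] at this
    rw [key]
    exact (𝓕.F n).add_mem m1 m2

/-- The transition map `A/Fₙ₊₁ → A/Fₙ` of the inverse system. -/
def transition (n : ℕ) : (𝓕.levelCon (n + 1)).Quotient → (𝓕.levelCon n).Quotient :=
  Quotient.map' id fun a b h => 𝓕.antitone n h

/-- The inverse limit `lim_n A/Fₙ`, realized as the set of sequences compatible with
the transition maps. -/
def Lim : Type _ :=
  { f : ∀ n : ℕ, (𝓕.levelCon n).Quotient // ∀ n : ℕ, 𝓕.transition n (f (n + 1)) = f n }

/-- The canonical map `A → lim_n A/Fₙ` (the underlying function of the canonical ring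
homomorphism). -/
def toLim (a : A) : 𝓕.Lim :=
  ⟨fun n => (𝓕.levelCon n).mk' a, fun _ => rfl⟩

end RingFiltration


namespace RingFiltration

variable {A' : Type*} [Ring A'] (𝓖 : RingFiltration A')

theorem F_le_of_le {m n : ℕ} (h : m ≤ n) : 𝓖.F n ≤ 𝓖.F m := by
  induction n with
  | zero => exact Nat.le_zero.mp h ▸ le_rfl
  | succ n ih =>
    rcases Nat.eq_or_lt_of_le h with rfl | h'
    · exact le_rfl
    · exact (𝓖.antitone n).trans (ih (Nat.lt_succ_iff.mp h'))

theorem mem_F_zero (a : A') : a ∈ 𝓖.F 0 := by rw [𝓖.zero_eq_top]; trivial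

end RingFiltration

/-- If the span of a set is finitely generated, some finite subset has the same span. -/
theorem exists_finite_subset_span_eq {R M : Type*} [Semiring R] [AddCommMonoid M] [Module R M]
    (S : Set M) (h : (Submodule.span R S).FG) :
    ∃ T : Set M, T ⊆ S ∧ T.Finite ∧ Submodule.span R T = Submodule.span R S := by
  obtain ⟨G, hG⟩ := h
  choose T hT₁ hT₂ using fun g (hg : g ∈ G) =>
    Submodule.mem_span_finite_of_mem_span (S := S)
      (show (g : M) ∈ Submodule.span R S by
        rw [← hG]; exact Submodule.subset_span hg)
  refine ⟨⋃ g ∈ G, (T g ‹_› : Set M), ?_, ?_, ?_⟩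
  · exact Set.iUnion₂_subset fun g hg => hT₁ g hg
  · exact Set.Finite.biUnion' G.finite_toSet fun g hg => Finset.finite_toSet (T g hg)
  · refine le_antisymm (Submodule.span_mono (Set.iUnion₂_subset fun g hg => hT₁ g hg)) ?_
    rw [← hG]
    rw [Submodule.span_le]
    intro g hg
    exact Submodule.span_mono (Set.subset_iUnion₂ (s := fun g hg => (T g hg : Set M)) g hg)
      (hT₂ g hg)

set_option maxHeartbeats 8000000
set_option synthInstance.maxHeartbeats 1000000

/-- let `A` be a unital ring with a decreasing multiplicative filtration
`A = F₀ ⊇ F₁ ⊇ ⋯` by additive subgroups (`Fₙ·Fₘ ⊆ Fₙ₊ₘ`), complete and Hausdorff with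
respect to the filtration (the canonical ring homomorphism `A → lim_n A/Fₙ` is
bijective).  If the associated graded ring `gr(A) = ⨁ₙ Fₙ/Fₙ₊₁` is left noetherian,
then `A` is left noetherian. -/
theorem isNoetherianRing_of_complete_filtration
    (𝓕 : RingFiltration A)
    (hcomplete : Function.Bijective 𝓕.toLim)
    (hnoeth : IsNoetherianRing 𝓕.AssociatedGraded) :
    IsNoetherianRing A := by
  classical
  rw [isNoetherianRing_iff_ideal_fg]
  intro I
  set gr := 𝓕.AssociatedGraded with hgr
  set π : 𝓕.Rees →+* gr := RingCon.mk' 𝓕.grCon with hπ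
  -- the set of symbols of elements of `I`
  set S : Set gr := {g | ∃ (n : ℕ) (a : A) (ha : a ∈ 𝓕.F n), a ∈ I ∧
      g = π (DirectSum.of (fun n => 𝓕.F n) n ⟨a, ha⟩)} with hS
  have hJfg : (Submodule.span gr S).FG := IsNoetherian.noetherian _
  obtain ⟨T, hTS, hTfin, hTspan⟩ := exists_finite_subset_span_eq S hJfg
  haveI : Fintype T := hTfin.fintype
  choose deg x hxF hxI hsym using fun i : T => hTS i.2
  -- key approximation step
  have approx : ∀ (t : ℕ) (a : A), a ∈ I → a ∈ 𝓕.F t →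
      ∃ c : T → A, (∀ i, c i ∈ 𝓕.F (t - deg i)) ∧
        a - ∑ i, c i * x i ∈ 𝓕.F (t + 1) := by
    intro t a haI haF
    have hmem : π (DirectSum.of (fun n => 𝓕.F n) t ⟨a, haF⟩) ∈ Submodule.span gr S :=
      Submodule.subset_span ⟨t, a, haF, haI, rfl⟩
    rw [← hTspan, ← Subtype.range_val (s := T), Submodule.mem_span_range_iff_exists_fun] at hmem
    obtain ⟨r, hr⟩ := hmem
    choose u hu using fun i : T => Quotient.mk''_surjective (s₁ := 𝓕.grCon.toSetoid) (r i)
    set w : 𝓕.Rees := DirectSum.of (fun n => 𝓕.F n) t ⟨a, haF⟩ -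
      ∑ i, u i * DirectSum.of (fun n => 𝓕.F n) (deg i) ⟨x i, hxF i⟩ with hw
    have hπw : π w = 0 := by
      rw [hw, map_sub, map_sum, sub_eq_zero, ← hr]
      refine (Finset.sum_congr rfl fun i _ => ?_).symm
      rw [smul_eq_mul, map_mul, ← hsym i]
      congr 1
      exact hu i
    have hrel : ∀ n, ((w n : A) - (((0 : 𝓕.Rees)) n : A)) ∈ 𝓕.F (n + 1) := by
      have : 𝓕.grCon w 0 := (RingCon.eq 𝓕.grCon).mp hπw
      exact this
    have hwt : (w t : A) - 0 ∈ 𝓕.F (t + 1) := by simpa using hrel t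
    refine ⟨fun i => if h : deg i ≤ t then ((u i) (t - deg i) : A) else 0, fun i => ?_, ?_⟩
    · by_cases h : deg i ≤ t
      · simpa [h] using ((u i) (t - deg i)).2
      · simp only [h, dif_neg, not_false_iff]
        exact zero_mem _
    · have hev : ∀ z : 𝓕.Rees, (z t : A) =
          (((𝓕.F t).subtype).comp (DFinsupp.evalAddMonoidHom t)) z := fun _ => rfl
      have hwt' : (w t : A) = a - ∑ i, (if h : deg i ≤ t
          then ((u i) (t - deg i) : A) else 0) * x i := by
        rw [hw]
        rw [hev]
        rw [map_sub, map_sum]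
        congr 1
        · rw [← hev, DirectSum.of_eq_same]
        · refine Finset.sum_congr rfl fun i _ => ?_
          rw [← hev, DirectSum.coe_mul_of_apply]
          by_cases h : deg i ≤ t
          · simp [h]
          · simp [h]
      rw [← hwt']
      simpa using hwt
  choose cfun hc1 hc2 using approx
  refine Submodule.fg_def.mpr ⟨Set.range x, Set.finite_range x, ?_⟩
  refine le_antisymm (Submodule.span_le.mpr ?_) ?_
  · rintro _ ⟨i, rfl⟩; exact hxI i
  · intro a haI
    let aseq : ∀ t : ℕ, {z : A // z ∈ I ∧ z ∈ 𝓕.F t} := fun t =>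
      Nat.rec (motive := fun t => {z : A // z ∈ I ∧ z ∈ 𝓕.F t})
        ⟨a, haI, 𝓕.mem_F_zero a⟩
        (fun t p => ⟨p.1 - ∑ i, cfun t p.1 p.2.1 p.2.2 i * x i,
          I.sub_mem p.2.1 (Submodule.sum_mem I fun i _ => by
            simpa [smul_eq_mul] using I.smul_mem (cfun t p.1 p.2.1 p.2.2 i) (hxI i)),
          hc2 t p.1 p.2.1 p.2.2⟩) t
    set c' : ℕ → T → A := fun t => cfun t (aseq t).1 (aseq t).2.1 (aseq t).2.2 with hc'
    have haseq : ∀ t, (aseq (t+1)).1 = (aseq t).1 - ∑ i, c' t i * x i := fun t => rfl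
    set d : ℕ → T → A := fun t i => ∑ u ∈ Finset.range t, c' u i with hdd
    have hd : ∀ t, a - ∑ i, d t i * x i = (aseq t).1 := by
      intro t
      induction t with
      | zero =>
        have h0 : (aseq 0).1 = a := rfl
        simp [hdd, h0]
      | succ t ih =>
        rw [haseq, ← ih]
        have hstep : ∀ i : T, d (t+1) i = d t i + c' t i := fun i =>
          Finset.sum_range_succ _ _
        simp only [hstep, add_mul, Finset.sum_add_distrib]
        abel
    have hconv : ∀ i : T, ∃ b : A, ∀ m, b - d (m + deg i) i ∈ 𝓕.F m := by
      intro i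
      have hcompat : ∀ m, 𝓕.transition m ((𝓕.levelCon (m+1)).mk' (d (m + 1 + deg i) i))
          = (𝓕.levelCon m).mk' (d (m + deg i) i) := by
        intro m
        have h1 : 𝓕.transition m ((𝓕.levelCon (m+1)).mk' (d (m + 1 + deg i) i))
            = (𝓕.levelCon m).mk' (d (m + 1 + deg i) i) := rfl
        rw [h1]
        refine (RingCon.eq _).mpr ?_
        show d (m + 1 + deg i) i - d (m + deg i) i ∈ 𝓕.F m
        have he : m + 1 + deg i = (m + deg i) + 1 := by omega
        rw [he]
        have h2 : d ((m + deg i) + 1) i - d (m + deg i) i = c' (m + deg i) i := by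
          rw [hdd]; simp [Finset.sum_range_succ]
        rw [h2]
        have h3 := hc1 (m + deg i) (aseq (m + deg i)).1
          (aseq (m + deg i)).2.1 (aseq (m + deg i)).2.2 i
        simpa [Nat.add_sub_cancel] using h3
      obtain ⟨b, hb⟩ := hcomplete.2
        ⟨fun m => (𝓕.levelCon m).mk' (d (m + deg i) i), hcompat⟩
      refine ⟨b, fun m => ?_⟩
      have h4 := congrArg (fun g : 𝓕.Lim => g.1 m) hb
      exact (RingCon.eq _).mp h4
    choose b hball using hconv
    have hzmem : ∀ m, a - ∑ i, b i * x i ∈ 𝓕.F m := by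
      intro m
      set B : ℕ := ∑ i : T, deg i with hB
      have hdegB : ∀ i : T, deg i ≤ m + B := fun i =>
        le_trans (Finset.single_le_sum (f := fun i : T => deg i)
          (fun _ _ => Nat.zero_le _) (Finset.mem_univ i)) (Nat.le_add_left _ _)
      have h1 : a - ∑ i, d (m + B) i * x i ∈ 𝓕.F (m + B) := by
        rw [hd]; exact (aseq (m + B)).2.2
      have h2 : ∀ i : T, (d (m + B) i - b i) * x i ∈ 𝓕.F (m + B) := by
        intro i
        have h3 : b i - d ((m + B - deg i) + deg i) i ∈ 𝓕.F (m + B - deg i) :=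
          hball i _
        rw [Nat.sub_add_cancel (hdegB i)] at h3
        have h4 : d (m + B) i - b i ∈ 𝓕.F (m + B - deg i) := by
          simpa using (𝓕.F (m + B - deg i)).neg_mem h3
        have h5 := 𝓕.mul_mem h4 (hxF i)
        rwa [Nat.sub_add_cancel (hdegB i)] at h5
      have key : a - ∑ i, b i * x i
          = (a - ∑ i, d (m + B) i * x i) + ∑ i, (d (m + B) i - b i) * x i := by
        simp only [sub_mul, Finset.sum_sub_distrib]
        abel
      rw [key]
      exact 𝓕.F_le_of_le (Nat.le_add_right m B)
        ((𝓕.F (m + B)).add_mem h1 ((𝓕.F (m + B)).sum_mem fun i _ => h2 i))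
    have hz0 : a - ∑ i, b i * x i = 0 := by
      apply hcomplete.1
      refine Subtype.ext (funext fun m => ?_)
      show (𝓕.levelCon m).mk' _ = (𝓕.levelCon m).mk' 0
      refine (RingCon.eq _).mpr ?_
      show (a - ∑ i, b i * x i) - 0 ∈ 𝓕.F m
      simpa using hzmem m
    have hfin : a = ∑ i, b i * x i := sub_eq_zero.mp hz0
    rw [hfin]
    exact Submodule.sum_mem _ fun i _ => by
      exact
        Submodule.smul_mem _ (b i) (Submodule.subset_span (Set.mem_range_self i))


end
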